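/- Let c_E be the sharp sub-exponential comparison constant, L a standard Laplace random variable, and ℓ_{c_E}(u) = E[(c_E·L − u)₊]. Let J_E be the stop-loss envelope associated to the sub-exponential tail envelope s_E(t) = min{1, 2e^{-t}}, namely J_E(u) = B_E − p_E·u for 0 ≤ u ≤ a_E and J_E(u) = ∫_u^∞ s_E(t) dt for u ≥ a_E. Then ℓ_{c_E}(u) ≥ J_E(u) for all u ≥ 0. -/

import Mathlib

open MeasureTheory Real Set
open scoped ENNReal NNReal

/-- The standard Laplace law on `ℝ`, with density `(1/2)e^{-|x|}` w.r.t. Lebesgue measure. -/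
noncomputable def laplaceMeasure : Measure ℝ :=
  (volume : Measure ℝ).withDensity fun x => ENNReal.ofReal ((1 / 2) * Real.exp (-|x|))

/-- The sub-exponential tail envelope `s_E(t) = min{1, 2e^{-t}}`. -/
noncomputable def sE (t : ℝ) : ℝ := min 1 (2 * Real.exp (-t))

/-- `A_E = ∫₀^∞ s_E(t) dt`. -/
noncomputable def AE : ℝ := ∫ t in Set.Ioi (0 : ℝ), sE t

/-- `H_E(x) = x s_E(x) + ∫_x^∞ s_E(t) dt`. -/
noncomputable def HE (x : ℝ) : ℝ := x * sE x + ∫ t in Set.Ioi x, sE t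

lemma sE_of_ge {t : ℝ} (h : Real.log 2 ≤ t) : sE t = 2 * Real.exp (-t) := by
  have h2 : Real.exp (-t) ≤ Real.exp (-Real.log 2) := Real.exp_le_exp.2 (by linarith)
  rw [Real.exp_neg (Real.log 2), Real.exp_log (by norm_num : (0:ℝ) < 2)] at h2
  exact min_eq_right (by nlinarith)

lemma sE_of_le {t : ℝ} (h : t ≤ Real.log 2) : sE t = 1 := by
  have h2 : Real.exp (-Real.log 2) ≤ Real.exp (-t) := Real.exp_le_exp.2 (by linarith)
  rw [Real.exp_neg (Real.log 2), Real.exp_log (by norm_num : (0:ℝ) < 2)] at h2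
  exact min_eq_left (by nlinarith)

lemma tail_ge {x : ℝ} (h : Real.log 2 ≤ x) :
    (∫ t in Set.Ioi x, sE t) = 2 * Real.exp (-x) := by
  rw [setIntegral_congr_fun measurableSet_Ioi
    (fun t ht => sE_of_ge (h.trans (le_of_lt ht)))]
  rw [MeasureTheory.integral_const_mul, integral_exp_neg_Ioi]

lemma sE_integrableOn_Ioi (x : ℝ) : IntegrableOn sE (Set.Ioi x) := by
  apply MeasureTheory.Integrable.mono'
    (g := fun t => 2 * Real.exp (-(1:ℝ) * t)) (by
      simpa using (exp_neg_integrableOn_Ioi x (by norm_num : (0:ℝ) < 1)).const_mul 2)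
  · exact ((continuous_const.min (continuous_const.mul
      (Real.continuous_exp.comp continuous_neg))).aestronglyMeasurable).restrict
  · filter_upwards with t
    have h1 : 0 ≤ sE t := le_min zero_le_one (by positivity)
    have h2 : sE t ≤ 2 * Real.exp (-t) := min_le_right _ _
    rw [Real.norm_eq_abs, abs_of_nonneg h1]
    simpa using h2

lemma tail_le {x : ℝ} (h : x ≤ Real.log 2) :
    (∫ t in Set.Ioi x, sE t) = (Real.log 2 - x) + 1 := by
  have hsplit : Set.Ioi x = Set.Ioc x (Real.log 2) ∪ Set.Ioi (Real.log 2) :=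
    (Set.Ioc_union_Ioi_eq_Ioi h).symm
  rw [hsplit, MeasureTheory.setIntegral_union (Set.Ioc_disjoint_Ioi le_rfl)
      measurableSet_Ioi ((sE_integrableOn_Ioi x).mono_set Set.Ioc_subset_Ioi_self)
      ((sE_integrableOn_Ioi x).mono_set (Set.Ioi_subset_Ioi h))]
  rw [tail_ge le_rfl, Real.exp_neg, Real.exp_log (by norm_num : (0:ℝ) < 2)]
  rw [setIntegral_congr_fun measurableSet_Ioc (fun t ht => sE_of_le ht.2)]
  rw [MeasureTheory.setIntegral_const, Real.volume_real_Ioc_of_le h,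
    smul_eq_mul, mul_one]
  ring

lemma AE_eq : AE = Real.log 2 + 1 := by
  rw [AE, tail_le (Real.log_nonneg (by norm_num))]; ring

lemma xexp_tendsto (v : ℝ) :
    Filter.Tendsto (fun x : ℝ => -((x - v + 1) * Real.exp (-x))) Filter.atTop (nhds 0) := by
  have h1 : Filter.Tendsto (fun x : ℝ => x * Real.exp (-x)) Filter.atTop (nhds 0) := by
    simpa using Real.tendsto_pow_mul_exp_neg_atTop_nhds_zero 1
  have h2 := Real.tendsto_exp_neg_atTop_nhds_zero
  have := ((h1.neg).add ((h2.const_mul (v - 1))))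
  simp only [neg_zero, mul_zero, add_zero, zero_add] at this
  refine this.congr fun x => by ring

lemma integral_sub_exp (v : ℝ) :
    (∫ x in Set.Ioi v, (x - v) * Real.exp (-x)) = Real.exp (-v) := by
  have hderiv : ∀ x ∈ Set.Ici v,
      HasDerivAt (fun x : ℝ => -((x - v + 1) * Real.exp (-x))) ((x - v) * Real.exp (-x)) x := by
    intro x _
    have h1 : HasDerivAt (fun x : ℝ => x - v + 1) 1 x := by
      simpa using ((hasDerivAt_id x).sub_const v).add_const 1
    have h2 : HasDerivAt (fun x : ℝ => Real.exp (-x)) (-Real.exp (-x)) x := by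
      simpa using (hasDerivAt_neg x).exp
    have := (h1.mul h2).neg
    exact this.congr_deriv (by ring)
  have := integral_Ioi_of_hasDerivAt_of_nonneg' hderiv
    (fun x hx => mul_nonneg (by linarith [Set.mem_Ioi.1 hx]) (Real.exp_nonneg _))
    (xexp_tendsto v)
  rw [this]; ring_nf

lemma laplace_stoploss {c u : ℝ} (hc : 0 < c) (hu : 0 ≤ u) :
    (∫ x, max (c * x - u) 0 ∂laplaceMeasure) = c / 2 * Real.exp (-(u / c)) := by
  have hmeas : Measurable fun x : ℝ => ((1 / 2 : ℝ) * Real.exp (-|x|)).toNNReal :=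
    (measurable_const.mul ((Real.measurable_exp).comp measurable_abs.neg)).real_toNNReal
  have hrw : (fun x : ℝ => ENNReal.ofReal ((1 / 2) * Real.exp (-|x|)))
      = fun x : ℝ => (((1 / 2 : ℝ) * Real.exp (-|x|)).toNNReal : ℝ≥0∞) := rfl
  rw [laplaceMeasure, hrw, integral_withDensity_eq_integral_smul hmeas]
  have hv : 0 ≤ u / c := div_nonneg hu hc.le
  have hstep : (∫ x : ℝ, ((1 / 2 : ℝ) * Real.exp (-|x|)).toNNReal • max (c * x - u) 0)
      = ∫ x in Set.Ioi (u / c), c / 2 * ((x - u / c) * Real.exp (-x)) := by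
    rw [← MeasureTheory.setIntegral_eq_integral_of_forall_compl_eq_zero
      (s := Set.Ioi (u / c)) (fun x hx => by
        have hx' : x ≤ u / c := not_lt.1 hx
        have hcu : c * (u / c) = u := by field_simp
        have : c * x - u ≤ 0 := by
          nlinarith [mul_le_mul_of_nonneg_left hx' hc.le]
        simp [max_eq_right this])]
    refine setIntegral_congr_fun measurableSet_Ioi fun x hx => ?_
    have hxv : u / c < x := hx
    have hx0 : 0 ≤ x := hv.trans hxv.le
    have hcx : 0 ≤ c * x - u := by
      have := (div_lt_iff₀ hc).1 hxv
      nlinarith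
    rw [NNReal.smul_def, Real.coe_toNNReal _ (by positivity), abs_of_nonneg hx0,
      max_eq_left hcx]
    field_simp
    ring
  rw [hstep, MeasureTheory.integral_const_mul, integral_sub_exp]
  
/-- Laplace stop-loss dominates the envelope: with `c_E` the sharp sub-exponential
comparison constant, `L` standard Laplace, `ℓ_{c_E}(u) = E[(c_E L − u)₊]`, and `J_E` the
stop-loss envelope for `s_E(t) = min{1, 2e^{-t}}` (`J_E(u) = B_E − p_E u` on `[0, a_E]`,
`J_E(u) = ∫_u^∞ s_E` for `u ≥ a_E`), one has `ℓ_{c_E}(u) ≥ J_E(u)` for all `u ≥ 0`. -/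
theorem stmt16
    (aE pE wE cE : ℝ)
    (haE : 0 < aE) (hHaE : HE aE = AE / 2)
    (hpE : pE = 2 * Real.exp (-aE))
    (hwE : wE = Real.log (1 / (2 * pE)))
    (hcE : cE = (AE / 2) / (pE * (1 + wE))) :
    ∀ u : ℝ, 0 ≤ u →
      (if u ≤ aE then AE / 2 - pE * u else ∫ t in Set.Ioi u, sE t) ≤
        ∫ x, max (cE * x - u) 0 ∂laplaceMeasure := by
  have hL2 : Real.log 2 < aE := by
    by_contra hcon
    push_neg at hcon
    have h1 : HE aE = AE := by
      rw [HE, sE_of_le hcon, tail_le hcon, AE_eq]; ring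
    rw [h1] at hHaE
    have : AE = 0 := by linarith
    rw [AE_eq] at this
    have := Real.log_nonneg (by norm_num : (1:ℝ) ≤ 2)
    linarith
  have hp_pos : 0 < pE := by rw [hpE]; positivity
  have hB : pE * (1 + aE) = AE / 2 := by
    have h1 : HE aE = aE * pE + pE := by
      rw [HE, sE_of_ge hL2.le, tail_ge hL2.le, hpE]
    rw [h1] at hHaE; linarith
  have hw : wE = aE - 2 * Real.log 2 := by
    have hlogp : Real.log pE = Real.log 2 + (-aE) := by
      rw [hpE, Real.log_mul (by norm_num) (Real.exp_ne_zero _), Real.log_exp]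
    rw [hwE, one_div, Real.log_inv, Real.log_mul (by norm_num) hp_pos.ne', hlogp]
    ring
  have hlog2_lt_one : Real.log 2 < 1 := by
    nlinarith [Real.log_two_lt_d9]
  have h1w : 0 < 1 + wE := by rw [hw]; linarith
  have hc0 : 0 < cE := by
    rw [hcE, ← hB]
    positivity
  have hc1 : 1 ≤ cE := by
    rw [hcE, ← hB]
    rw [le_div_iff₀ (by positivity)]
    have : 1 + wE ≤ 1 + aE := by rw [hw]; linarith [Real.log_nonneg (by norm_num : (1:ℝ) ≤ 2)]
    nlinarith
  have hewp : Real.exp (-wE) = 2 * pE := by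
    have : -wE = Real.log (2 * pE) := by
      rw [hwE, one_div, Real.log_inv]; ring
    rw [this, Real.exp_log (by positivity)]
  have hcpw : cE * (pE * (1 + wE)) = AE / 2 := by
    rw [hcE, div_mul_cancel₀]
    positivity
  have key1 : ∀ u : ℝ, AE / 2 - pE * u ≤ cE / 2 * Real.exp (-(u / cE)) := by
    intro u
    have h1 : Real.exp (-wE) * (1 + (wE - u / cE)) ≤ Real.exp (-(u / cE)) := by
      have h2 : (1 : ℝ) + (wE - u / cE) ≤ Real.exp (wE - u / cE) := by
        linarith [Real.add_one_le_exp (wE - u / cE)]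
      calc Real.exp (-wE) * (1 + (wE - u / cE))
          ≤ Real.exp (-wE) * Real.exp (wE - u / cE) :=
            mul_le_mul_of_nonneg_left h2 (Real.exp_nonneg _)
        _ = Real.exp (-(u / cE)) := by rw [← Real.exp_add]; ring_nf
    have h3 : cE / 2 * (Real.exp (-wE) * (1 + (wE - u / cE)))
        ≤ cE / 2 * Real.exp (-(u / cE)) :=
      mul_le_mul_of_nonneg_left h1 (by positivity)
    refine le_trans (le_of_eq ?_) h3
    rw [hewp]
    have : cE / 2 * (2 * pE * (1 + (wE - u / cE)))
        = cE * (pE * (1 + wE)) - pE * (cE * (u / cE)) := by ring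
    rw [this, hcpw, mul_div_cancel₀ _ hc0.ne']
  intro u hu
  rw [laplace_stoploss hc0 hu]
  split_ifs with h
  · exact key1 u
  · push_neg at h
    rw [tail_ge (hL2.le.trans h.le)]
    have base : pE ≤ cE / 2 * Real.exp (-(aE / cE)) := by
      have := key1 aE
      rw [← hB] at this
      nlinarith
    have step1 : cE / 2 * Real.exp (-(u / cE))
        = (cE / 2 * Real.exp (-(aE / cE))) * Real.exp (-((u - aE) / cE)) := by
      rw [mul_assoc, ← Real.exp_add]
      congr 1
      field_simp
      ring
    have step2 : pE * Real.exp (-((u - aE) / cE))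
        ≤ (cE / 2 * Real.exp (-(aE / cE))) * Real.exp (-((u - aE) / cE)) :=
      mul_le_mul_of_nonneg_right base (Real.exp_nonneg _)
    have step3 : pE * Real.exp (-(u - aE)) ≤ pE * Real.exp (-((u - aE) / cE)) := by
      apply mul_le_mul_of_nonneg_left _ hp_pos.le
      apply Real.exp_le_exp.2
      have : (u - aE) / cE ≤ u - aE := div_le_self (by linarith) hc1
      linarith
    have step4 : pE * Real.exp (-(u - aE)) = 2 * Real.exp (-u) := by
      rw [hpE, mul_assoc, ← Real.exp_add]
      congr 2
      ring
    rw [step1]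
    calc 2 * Real.exp (-u) = pE * Real.exp (-(u - aE)) := step4.symm
      _ ≤ pE * Real.exp (-((u - aE) / cE)) := step3
      _ ≤ _ := step2
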